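/- Let H_X ∈ F₂^{n_X × n}, let q ≥ 2, and let H_R ∈ F₂^{(q−1) × q} be the repetition-code parity check matrix. Let H'_X be the matrix obtained by stacking H_X ⊗ ê₁ᵀ on top of I_n ⊗ H_R, where ê₁ = (1,0,…,0) ∈ F₂^q. Then ker(H'_X) = { L ⊗ 1_q : L ∈ ker(H_X) }, where 1_q ∈ F₂^q is the all-ones vector. -/
import Mathlib


open Matrix

/-- Parity check matrix of the `[q,1,q]` repetition code: row `j` is `e_j + e_{j+1}`. -/
def repCheck (q : ℕ) : Matrix (Fin (q - 1)) (Fin q) (ZMod 2) :=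
  Matrix.of fun j c => if c.val = j.val ∨ c.val = j.val + 1 then 1 else 0

/-- `I_n ⊗ H_R` acting on `F₂^n ⊗ F₂^q`. -/
def idKronRep (n q : ℕ) : Matrix (Fin n × Fin (q - 1)) (Fin n × Fin q) (ZMod 2) :=
  Matrix.of fun b p => if p.1 = b.1 then repCheck q b.2 p.2 else 0

/-- `H_X ⊗ ê₁ᵀ` where `ê₁ = (1,0,…,0) ∈ F₂^q`. -/
def kronE1 {nX n : ℕ} (q : ℕ) (HX : Matrix (Fin nX) (Fin n) (ZMod 2)) :
    Matrix (Fin nX) (Fin n × Fin q) (ZMod 2) :=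
  Matrix.of fun a p => if p.2.val = 0 then HX a p.1 else 0

/-- X check matrix of the copied code: `H_X ⊗ ê₁ᵀ` stacked on top of `I_n ⊗ H_R`. -/
def copyX {nX n : ℕ} (q : ℕ) (HX : Matrix (Fin nX) (Fin n) (ZMod 2)) :
    Matrix (Fin nX ⊕ (Fin n × Fin (q - 1))) (Fin n × Fin q) (ZMod 2) :=
  Matrix.of fun s p =>
    match s with
    | Sum.inl a => kronE1 q HX a p
    | Sum.inr b => idKronRep n q b p

/-- Z check matrix of the copied code: `H_Z ⊗ 1_qᵀ`. -/
def copyZ {nZ n : ℕ} (q : ℕ) (HZ : Matrix (Fin nZ) (Fin n) (ZMod 2)) :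
    Matrix (Fin nZ) (Fin n × Fin q) (ZMod 2) :=
  Matrix.of fun s p => HZ s p.1

lemma sum_rep (n q : ℕ) (i : Fin n) (j : Fin (q-1)) (v : Fin n × Fin q → ZMod 2) :
    ∑ p : Fin n × Fin q, idKronRep n q (i,j) p * v p =
      v (i, ⟨j.val, by omega⟩) + v (i, ⟨j.val + 1, by have := j.isLt; omega⟩) := by
  have hne : (⟨j.val, by omega⟩ : Fin q) ≠ ⟨j.val + 1, by have := j.isLt; omega⟩ := by
    simp [Fin.ext_iff]
  have key : ∀ p : Fin n × Fin q, idKronRep n q (i,j) p * v p =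
      (if p = (i, ⟨j.val, by omega⟩) then v p else 0) +
      (if p = (i, ⟨j.val + 1, by have := j.isLt; omega⟩) then v p else 0) := by
    rintro ⟨i', c⟩
    simp only [idKronRep, repCheck, Matrix.of_apply, Prod.mk.injEq]
    by_cases hi : i' = i
    · subst hi
      by_cases h1 : c.val = j.val
      · have hc : c = ⟨j.val, by omega⟩ := Fin.ext h1
        simp [hc, hne, h1]
      · by_cases h2 : c.val = j.val + 1
        · have hc : c = ⟨j.val + 1, by have := j.isLt; omega⟩ := Fin.ext h2
          simp [hc, hne.symm, h2]
        · have : ¬ (c.val = j.val ∨ c.val = j.val + 1) := by omega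
          simp [this, Fin.ext_iff, h1, h2]
    · simp [hi]
  rw [Finset.sum_congr rfl fun p _ => key p, Finset.sum_add_distrib,
    Finset.sum_ite_eq' Finset.univ, Finset.sum_ite_eq' Finset.univ]
  simp

lemma sum_e1 {nX n : ℕ} (q : ℕ) (hq : 0 < q) (HX : Matrix (Fin nX) (Fin n) (ZMod 2))
    (a : Fin nX) (v : Fin n × Fin q → ZMod 2) :
    ∑ p : Fin n × Fin q, kronE1 q HX a p * v p =
      ∑ i : Fin n, HX a i * v (i, ⟨0, hq⟩) := by
  rw [Fintype.sum_prod_type]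
  refine Finset.sum_congr rfl fun i _ => ?_
  have key : ∀ c : Fin q, kronE1 q HX a (i, c) * v (i, c) =
      if c = ⟨0, hq⟩ then HX a i * v (i, ⟨0, hq⟩) else 0 := by
    intro c
    simp only [kronE1, Matrix.of_apply]
    by_cases h : c.val = 0
    · have hc : c = ⟨0, hq⟩ := Fin.ext h
      simp [hc, h]
    · simp [h, Fin.ext_iff]
  rw [Finset.sum_congr rfl fun c _ => key c, Finset.sum_ite_eq' Finset.univ]
  simp

lemma two_eq {a b : ZMod 2} (h : a + b = 0) : a = b := by revert h; revert a b; decide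

/-- **Kernel of the copied X check matrix:** `ker(H'_X) = { L ⊗ 1_q : L ∈ ker(H_X) }`. -/
theorem copied_X_kernel {nX n q : ℕ} (hq : 2 ≤ q)
    (HX : Matrix (Fin nX) (Fin n) (ZMod 2)) :
    {v : Fin n × Fin q → ZMod 2 | (copyX q HX).mulVec v = 0} =
      {v : Fin n × Fin q → ZMod 2 |
        ∃ L : Fin n → ZMod 2, HX.mulVec L = 0 ∧ v = fun p => L p.1} := by
  have h0 : 0 < q := by omega
  ext v
  simp only [Set.mem_setOf_eq]
  constructor
  · intro h
    have hrep : ∀ (i : Fin n) (j : Fin (q-1)),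
        v (i, ⟨j.val, by have := j.isLt; omega⟩) =
          v (i, ⟨j.val + 1, by have := j.isLt; omega⟩) := by
      intro i j
      apply two_eq
      calc v (i, ⟨j.val, by have := j.isLt; omega⟩) +
            v (i, ⟨j.val + 1, by have := j.isLt; omega⟩)
          = ∑ p : Fin n × Fin q, idKronRep n q (i,j) p * v p := (sum_rep n q i j v).symm
        _ = 0 := congrFun h (Sum.inr (i, j))
    have hconst : ∀ (i : Fin n) (c : Fin q), v (i, c) = v (i, ⟨0, h0⟩) := by
      intro i c
      suffices H : ∀ k (hk : k < q), v (i, ⟨k, hk⟩) = v (i, ⟨0, h0⟩) by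
        obtain ⟨k, hk⟩ := c; exact H k hk
      intro k
      induction k with
      | zero => intro hk; rfl
      | succ m ih =>
        intro hk
        have hm : m < q - 1 := by omega
        exact (hrep i ⟨m, hm⟩).symm.trans (ih (by omega))
    refine ⟨fun i => v (i, ⟨0, h0⟩), ?_, ?_⟩
    · funext a
      calc HX.mulVec (fun i => v (i, ⟨0, h0⟩)) a
          = ∑ p : Fin n × Fin q, kronE1 q HX a p * v p := (sum_e1 q h0 HX a v).symm
        _ = 0 := congrFun h (Sum.inl a)
    · funext p
      exact hconst p.1 p.2
  · rintro ⟨L, hL, rfl⟩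
    funext s
    cases s with
    | inl a =>
      calc (copyX q HX).mulVec (fun p => L p.1) (Sum.inl a)
          = ∑ i : Fin n, HX a i * L i := sum_e1 q h0 HX a _
        _ = 0 := congrFun hL a
    | inr b =>
      obtain ⟨i, j⟩ := b
      calc (copyX q HX).mulVec (fun p => L p.1) (Sum.inr (i, j))
          = L i + L i := sum_rep n q i j _
        _ = 0 := by generalize L i = x; revert x; decide
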